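/- The Banach space ℓ¹ is weakly sequentially complete: every sequence in ℓ¹ that is weakly Cauchy (i.e., (f(xₙ)) converges in ℝ for every continuous linear functional f) converges weakly to some element of ℓ¹. -/

import Mathlib

set_option maxHeartbeats 1000000
open Filter Topology
open scoped ENNReal

noncomputable abbrev E1 := lp (fun _ : ℕ => ℝ) 1

lemma l1_summable (f : E1) : Summable (fun n => |f n|) := by
  simpa using (lp.memℓp f).summable (by norm_num : (0:ℝ) < (1:ℝ≥0∞).toReal)

lemma l1_norm (f : E1) : ‖f‖ = ∑' n, |f n| := by
  have := lp.norm_eq_tsum_rpow (by norm_num : (0:ℝ) < (1:ℝ≥0∞).toReal) f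
  simpa using this

-- functional from bounded sequence
noncomputable def sfun (s : ℕ → ℝ) (hs : ∀ n, |s n| ≤ 1) : E1 →L[ℝ] ℝ :=
  LinearMap.mkContinuous
    { toFun := fun f => ∑' n, s n * f n
      map_add' := by
        intro f g
        have hf : Summable (fun n => s n * f n) := by
          apply Summable.of_abs
          apply (l1_summable f).of_nonneg_of_le (fun n => abs_nonneg _)
          intro n
          rw [abs_mul]
          exact mul_le_of_le_one_left (abs_nonneg _) (hs n)
        have hg : Summable (fun n => s n * g n) := by
          apply Summable.of_abs
          apply (l1_summable g).of_nonneg_of_le (fun n => abs_nonneg _)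
          intro n
          rw [abs_mul]
          exact mul_le_of_le_one_left (abs_nonneg _) (hs n)
        simp only [lp.coeFn_add, Pi.add_apply, mul_add]
        exact Summable.tsum_add hf hg
      map_smul' := by
        intro c f
        simp only [lp.coeFn_smul, Pi.smul_apply, smul_eq_mul, RingHom.id_apply]
        rw [← tsum_mul_left]
        congr 1; ext n; ring }
    1
    (by
      intro f
      simp only [LinearMap.coe_mk, AddHom.coe_mk, one_mul]
      calc |∑' n, s n * f n| ≤ ∑' n, |s n * f n| := by
            have hsum : Summable fun n => |s n * f n| := by
              apply (l1_summable f).of_nonneg_of_le (fun n => abs_nonneg _)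
              intro n; rw [abs_mul]; exact mul_le_of_le_one_left (abs_nonneg _) (hs n)
            have h2 := norm_tsum_le_tsum_norm (f := fun n => s n * f n)
              (by simp only [Real.norm_eq_abs]; exact hsum)
            simpa [Real.norm_eq_abs, abs_mul] using h2
          _ ≤ ∑' n, |f n| := by
            have hsum2 : Summable fun n => |s n| * |(f : ∀ _ : ℕ, ℝ) n| := by
              apply (l1_summable f).of_nonneg_of_le
                (fun n => mul_nonneg (abs_nonneg _) (abs_nonneg _))
              intro n; exact mul_le_of_le_one_left (abs_nonneg _) (hs n)
            simp only [abs_mul]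
            exact Summable.tsum_le_tsum (fun n => mul_le_of_le_one_left (abs_nonneg _) (hs n))
              hsum2 (l1_summable f)
          _ = ‖f‖ := (l1_norm f).symm)

lemma sfun_apply (s : ℕ → ℝ) (hs : ∀ n, |s n| ≤ 1) (f : E1) :
    sfun s hs f = ∑' n, s n * f n := rfl

lemma sfun_summable (s : ℕ → ℝ) (hs : ∀ n, |s n| ≤ 1) (f : E1) :
    Summable (fun n => s n * f n) := by
  apply Summable.of_abs
  apply (l1_summable f).of_nonneg_of_le (fun n => abs_nonneg _)
  intro n
  rw [abs_mul]
  exact mul_le_of_le_one_left (abs_nonneg _) (hs n)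

lemma sign_abs_le (r : ℝ) : |Real.sign r| ≤ 1 := by
  rcases Real.sign_apply_eq r with h | h | h <;> rw [h] <;> norm_num

lemma l1_sign_mul_self (r : ℝ) : Real.sign r * r = |r| := by
  rcases lt_trichotomy r 0 with h | h | h
  · rw [Real.sign_of_neg h, abs_of_neg h]; ring
  · simp [h]
  · rw [Real.sign_of_pos h, abs_of_pos h]; ring

-- coordinate functional
noncomputable def coordFun (n : ℕ) : E1 →L[ℝ] ℝ :=
  sfun (fun m => if m = n then 1 else 0) (by intro m; split <;> norm_num)

lemma coordFun_apply (n : ℕ) (f : E1) : coordFun n f = f n := by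
  rw [coordFun, sfun_apply]
  rw [show (fun m => (if m = n then (1:ℝ) else 0) * f m) = fun m => if m = n then f n else 0 by
    ext m; split
    · next h => simp [h]
    · simp_all]
  exact tsum_ite_eq n (fun _ => (f : ∀ _ : ℕ, ℝ) n)

lemma schur (u : ℕ → E1)
    (h0 : ∀ f : E1 →L[ℝ] ℝ, Tendsto (fun j => f (u j)) atTop (𝓝 0)) :
    Tendsto (fun j => ‖u j‖) atTop (𝓝 0) := by
  by_contra hcon
  -- extract ε and a subsequence with norms ≥ ε
  rw [Metric.tendsto_atTop] at hcon
  push_neg at hcon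
  obtain ⟨ε, hε, hfreq⟩ := hcon
  have hfreq' : ∀ N, ∃ j > N, ε ≤ ‖u j‖ := by
    intro N
    obtain ⟨j, hj1, hj2⟩ := hfreq (N + 1)
    refine ⟨j, by omega, ?_⟩
    rwa [Real.dist_eq, sub_zero, abs_of_nonneg (norm_nonneg _)] at hj2
  obtain ⟨φ, hφ, hφε⟩ := Nat.exists_strictMono_subsequence hfreq'
  set v : ℕ → E1 := fun j => u (φ j) with hv
  have hv0 : ∀ f : E1 →L[ℝ] ℝ, Tendsto (fun j => f (v j)) atTop (𝓝 0) :=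
    fun f => (h0 f).comp hφ.tendsto_atTop
  -- coordinates tend to 0
  have hcoord : ∀ n, Tendsto (fun j => (v j : ∀ _ : ℕ, ℝ) n) atTop (𝓝 0) := by
    intro n
    have := hv0 (coordFun n)
    simpa [coordFun_apply] using this
  -- heads tend to 0
  have hhead : ∀ m, Tendsto (fun j => ∑ n ∈ Finset.range m, |(v j : ∀ _ : ℕ, ℝ) n|)
      atTop (𝓝 0) := by
    intro m
    have : Tendsto (fun j => ∑ n ∈ Finset.range m, |(v j : ∀ _ : ℕ, ℝ) n|) atTop
        (𝓝 (∑ n ∈ Finset.range m, |(0:ℝ)|)) := by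
      apply tendsto_finset_sum
      intro n _
      exact ((hcoord n).abs)
    simpa using this
  -- existence of good heads and tails
  have ex_head : ∀ (m N : ℕ), ∃ j > N, ∑ n ∈ Finset.range m, |(v j : ∀ _ : ℕ, ℝ) n| < ε/8 := by
    intro m N
    have := (hhead m).eventually (eventually_lt_nhds (by linarith : (0:ℝ) < ε/8))
    rw [eventually_atTop] at this
    obtain ⟨N', hN'⟩ := this
    exact ⟨max N' (N+1), by omega, hN' _ (le_max_left _ _)⟩
  have ex_tail : ∀ (j m : ℕ), ∃ m' > m, ∑' n, |(v j : ∀ _ : ℕ, ℝ) (n + m')| < ε/8 := by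
    intro j m
    have htail : Tendsto (fun k => ∑' n, |(v j : ∀ _ : ℕ, ℝ) (n + k)|) atTop (𝓝 0) :=
      _root_.tendsto_sum_nat_add (f := fun t => |(v j : ∀ _ : ℕ, ℝ) t|)
    have := htail.eventually (eventually_lt_nhds (by linarith : (0:ℝ) < ε/8))
    rw [eventually_atTop] at this
    obtain ⟨N', hN'⟩ := this
    exact ⟨max N' (m+1), by omega, hN' _ (le_max_left _ _)⟩
  -- recursive construction of indices and cutoffs
  choose M hM1 hM2 using ex_tail
  choose J hJ1 hJ2 using ex_head
  let Q : ℕ → ℕ × ℕ := fun t => Nat.rec (0, 0) (fun _ p => (J (M p.1 p.2) p.1, M p.1 p.2)) t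
  set I : ℕ → ℕ := fun t => (Q t).1 with hI
  set Mc : ℕ → ℕ := fun t => (Q t).2 with hMcdef
  have hQs : ∀ t, Q (t+1) = (J (M (I t) (Mc t)) (I t), M (I t) (Mc t)) := fun t => rfl
  have hMc0 : Mc 0 = 0 := rfl
  have hMcmono : StrictMono Mc := by
    apply strictMono_nat_of_lt_succ
    intro t
    have : Mc (t+1) = M (I t) (Mc t) := by rw [hMcdef]
    rw [this]
    exact hM1 (I t) (Mc t)
  have hImono : StrictMono I := by
    apply strictMono_nat_of_lt_succ
    intro t
    have : I (t+1) = J (M (I t) (Mc t)) (I t) := by rw [hI]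
    rw [this]
    exact hJ1 _ (I t)
  have hhead' : ∀ t, ∑ n ∈ Finset.range (Mc t), |(v (I t) : ∀ _ : ℕ, ℝ) n| < ε/8 := by
    intro t
    cases t with
    | zero => rw [hMc0]; simpa using (by linarith : (0:ℝ) < ε/8)
    | succ t =>
      have e1 : Mc (t+1) = M (I t) (Mc t) := by rw [hMcdef]
      have e2 : I (t+1) = J (M (I t) (Mc t)) (I t) := by rw [hI]
      rw [e1, e2]
      exact hJ2 _ _
  have htail' : ∀ t, ∑' n, |(v (I t) : ∀ _ : ℕ, ℝ) (n + Mc (t+1))| < ε/8 := by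
    intro t
    have e1 : Mc (t+1) = M (I t) (Mc t) := by rw [hMcdef]
    rw [e1]
    exact hM2 (I t) (Mc t)
  -- the sign sequence
  set T : ℕ → ℕ := fun n => Nat.findGreatest (fun t => Mc t ≤ n) n with hTdef
  set s : ℕ → ℝ := fun n => Real.sign ((v (I (T n)) : ∀ _ : ℕ, ℝ) n) with hsdef
  have hs : ∀ n, |s n| ≤ 1 := fun n => sign_abs_le _
  have hT : ∀ t n, Mc t ≤ n → n < Mc (t+1) → T n = t := by
    intro t n h1 h2
    have hMcge : t ≤ Mc t := hMcmono.le_apply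
    have ht_le : t ≤ n := le_trans hMcge h1
    have h3 : t ≤ T n := Nat.le_findGreatest ht_le h1
    have h5 : Mc (T n) ≤ n := Nat.findGreatest_spec (P := fun t => Mc t ≤ n) ht_le h1
    by_contra hne
    have h4 : t + 1 ≤ T n := by omega
    have : Mc (t+1) ≤ Mc (T n) := hMcmono.monotone h4
    omega
  set F := sfun s hs with hF
  -- the key estimate
  have hkey : ∀ t, ε/2 ≤ F (v (I t)) := by
    intro t
    set w := v (I t) with hw
    set a := Mc t with ha
    set b := Mc (t+1) with hb
    have hab : a ≤ b := (hMcmono (lt_add_one t)).le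
    have hsumw : Summable (fun n => s n * (w : ∀ _ : ℕ, ℝ) n) := sfun_summable s hs w
    have habs : Summable (fun n => |(w : ∀ _ : ℕ, ℝ) n|) := l1_summable w
    have hsplit : ∑ n ∈ Finset.range b, s n * (w : ∀ _ : ℕ, ℝ) n
        + ∑' n, s (n + b) * (w : ∀ _ : ℕ, ℝ) (n + b)
        = ∑' n, s n * (w : ∀ _ : ℕ, ℝ) n := Summable.sum_add_tsum_nat_add b hsumw
    have hsplit2 : ∑ n ∈ Finset.range a, s n * (w : ∀ _ : ℕ, ℝ) n
        + ∑ n ∈ Finset.Ico a b, s n * (w : ∀ _ : ℕ, ℝ) n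
        = ∑ n ∈ Finset.range b, s n * (w : ∀ _ : ℕ, ℝ) n :=
      Finset.sum_range_add_sum_Ico _ hab
    have hmid : ∀ n ∈ Finset.Ico a b, s n * (w : ∀ _ : ℕ, ℝ) n = |(w : ∀ _ : ℕ, ℝ) n| := by
      intro n hn
      rw [Finset.mem_Ico] at hn
      have : T n = t := hT t n hn.1 hn.2
      rw [hsdef]
      dsimp only
      rw [this, ← hw]
      exact l1_sign_mul_self _
    have hnormsplit : ∑ n ∈ Finset.range b, |(w : ∀ _ : ℕ, ℝ) n|
        + ∑' n, |(w : ∀ _ : ℕ, ℝ) (n + b)| = ∑' n, |(w : ∀ _ : ℕ, ℝ) n| :=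
      Summable.sum_add_tsum_nat_add b habs
    have hnormsplit2 : ∑ n ∈ Finset.range a, |(w : ∀ _ : ℕ, ℝ) n|
        + ∑ n ∈ Finset.Ico a b, |(w : ∀ _ : ℕ, ℝ) n|
        = ∑ n ∈ Finset.range b, |(w : ∀ _ : ℕ, ℝ) n| :=
      Finset.sum_range_add_sum_Ico _ hab
    have hheadbound : |∑ n ∈ Finset.range a, s n * (w : ∀ _ : ℕ, ℝ) n|
        ≤ ∑ n ∈ Finset.range a, |(w : ∀ _ : ℕ, ℝ) n| := by
      refine (Finset.abs_sum_le_sum_abs _ _).trans (Finset.sum_le_sum ?_)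
      intro n _
      rw [abs_mul]
      exact mul_le_of_le_one_left (abs_nonneg _) (hs n)
    have htsumabs : Summable (fun n => |(w : ∀ _ : ℕ, ℝ) (n + b)|) :=
      (summable_nat_add_iff b).2 habs
    have htailbound : |∑' n, s (n + b) * (w : ∀ _ : ℕ, ℝ) (n + b)|
        ≤ ∑' n, |(w : ∀ _ : ℕ, ℝ) (n + b)| := by
      have hsum3 : Summable (fun n => |s (n + b) * (w : ∀ _ : ℕ, ℝ) (n + b)|) := by
        apply htsumabs.of_nonneg_of_le (fun n => abs_nonneg _)
        intro n
        rw [abs_mul]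
        exact mul_le_of_le_one_left (abs_nonneg _) (hs _)
      have h1 := norm_tsum_le_tsum_norm (f := fun n => s (n + b) * (w : ∀ _ : ℕ, ℝ) (n + b))
        (by simp only [Real.norm_eq_abs]; exact hsum3)
      simp only [Real.norm_eq_abs] at h1
      refine h1.trans (Summable.tsum_le_tsum ?_ hsum3 htsumabs)
      intro n
      rw [abs_mul]
      exact mul_le_of_le_one_left (abs_nonneg _) (hs _)
    have hmid_eq : ∑ n ∈ Finset.Ico a b, s n * (w : ∀ _ : ℕ, ℝ) n
        = ∑ n ∈ Finset.Ico a b, |(w : ∀ _ : ℕ, ℝ) n| := Finset.sum_congr rfl hmid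
    have hnorm : ‖w‖ = ∑' n, |(w : ∀ _ : ℕ, ℝ) n| := l1_norm w
    have hεw : ε ≤ ‖w‖ := hφε (I t)
    have hh : ∑ n ∈ Finset.range a, |(w : ∀ _ : ℕ, ℝ) n| < ε/8 := hhead' t
    have ht2 : ∑' n, |(w : ∀ _ : ℕ, ℝ) (n + b)| < ε/8 := htail' t
    have hFw : F w = ∑' n, s n * (w : ∀ _ : ℕ, ℝ) n := sfun_apply s hs w
    rw [hFw, ← hsplit, ← hsplit2, hmid_eq]
    have hhb : -(ε/8) ≤ ∑ n ∈ Finset.range a, s n * (w : ∀ _ : ℕ, ℝ) n := by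
      have := (abs_le.1 (hheadbound.trans hh.le)).1
      linarith
    have htb : -(ε/8) ≤ ∑' n, s (n + b) * (w : ∀ _ : ℕ, ℝ) (n + b) := by
      have := (abs_le.1 (htailbound.trans ht2.le)).1
      linarith
    have hmge : ε - ε/8 - ε/8 ≤ ∑ n ∈ Finset.Ico a b, |(w : ∀ _ : ℕ, ℝ) n| := by
      have : ∑ n ∈ Finset.Ico a b, |(w : ∀ _ : ℕ, ℝ) n|
          = ‖w‖ - ∑ n ∈ Finset.range a, |(w : ∀ _ : ℕ, ℝ) n|
            - ∑' n, |(w : ∀ _ : ℕ, ℝ) (n + b)| := by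
        rw [hnorm, ← hnormsplit, ← hnormsplit2]; ring
      rw [this]
      linarith
    linarith
  -- contradiction with weak nullity
  have hFnull : Tendsto (fun t => F (v (I t))) atTop (𝓝 0) :=
    (hv0 F).comp hImono.tendsto_atTop
  have := (hFnull.eventually (eventually_lt_nhds (by linarith : (0:ℝ) < ε/2))).exists
  obtain ⟨t, ht⟩ := this
  have := hkey t
  linarith

/-- `ℓ¹` is weakly sequentially complete: every weakly Cauchy sequence in `ℓ¹`
converges weakly to some element of `ℓ¹`. -/
theorem stmt_5 (x : ℕ → lp (fun _ : ℕ => ℝ) 1)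
    (hw : ∀ f : lp (fun _ : ℕ => ℝ) 1 →L[ℝ] ℝ, CauchySeq (fun k => f (x k))) :
    ∃ y : lp (fun _ : ℕ => ℝ) 1, ∀ f : lp (fun _ : ℕ => ℝ) 1 →L[ℝ] ℝ,
      Tendsto (fun k => f (x k)) atTop (𝓝 (f y)) := by
  have hcauchy : CauchySeq x := by
    by_contra hc
    rw [Metric.cauchySeq_iff] at hc
    push_neg at hc
    obtain ⟨ε, hε, hc⟩ := hc
    choose a ha b hb hd using hc
    set u : ℕ → E1 := fun N => x (a N) - x (b N) with hu
    have hta : Tendsto a atTop atTop := tendsto_atTop_mono ha tendsto_id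
    have htb : Tendsto b atTop atTop := tendsto_atTop_mono hb tendsto_id
    have h0 : ∀ f : E1 →L[ℝ] ℝ, Tendsto (fun N => f (u N)) atTop (𝓝 0) := by
      intro f
      obtain ⟨L, hL⟩ := cauchySeq_tendsto_of_complete (hw f)
      have h1 : Tendsto (fun N => f (x (a N))) atTop (𝓝 L) := hL.comp hta
      have h2 : Tendsto (fun N => f (x (b N))) atTop (𝓝 L) := hL.comp htb
      have := h1.sub h2
      rw [sub_self] at this
      simpa [hu, map_sub] using this
    have hnn := schur u h0
    obtain ⟨N, hN⟩ := (hnn.eventually (eventually_lt_nhds hε)).exists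
    have : ε ≤ ‖u N‖ := by
      rw [hu]
      simpa [dist_eq_norm] using hd N
    linarith
  obtain ⟨y, hy⟩ := cauchySeq_tendsto_of_complete hcauchy
  exact ⟨y, fun f => (f.continuous.tendsto y).comp hy⟩
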